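/- Let G be a finitely generated free group with the chain of subgroups G = G₀ ⊇ G₁ ⊇ ⋯ defined by successively taking the normal closure of all free generators except one of minimal word length. Then for every positive integer r there exists a positive integer m such that the free generating set S_m of G_m contains no element of S-length smaller than r. -/

import Mathlib

namespace StmtAux
open FreeGroup List

set_option linter.unusedSectionVars false

variable {ι : Type*} [DecidableEq ι]

/-- inversion of a single letter -/
def inv1 (p : ι × Bool) : ι × Bool := (p.1, !p.2)

/-- reduced word predicate -/
def RW (w : List (ι × Bool)) : Prop := w.Chain' fun p q => ¬(p.1 = q.1 ∧ p.2 = !q.2)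

lemma RW.reduce_eq {w : List (ι × Bool)} (h : RW w) : reduce w = w := by
  induction w with
  | nil => rfl
  | cons p w ih =>
    have hw : RW w := h.tail
    rw [reduce.cons, ih hw]
    cases w with
    | nil => rfl
    | cons q t =>
      have hpq : ¬(p.1 = q.1 ∧ p.2 = !q.2) := (List.isChain_cons_cons.1 h).1
      simp only [hpq, if_false]

lemma rw_reduce (w : List (ι × Bool)) : RW (reduce w) := by
  induction w with
  | nil => exact List.isChain_nil
  | cons p w ih =>
    rw [reduce.cons]
    rcases h : reduce w with _ | ⟨hd, tl⟩
    · exact List.isChain_singleton _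
    · rw [h] at ih
      by_cases hc : p.1 = hd.1 ∧ p.2 = !hd.2
      · simp only [hc, if_true]
        exact ih.tail
      · simp only [hc, if_false]
        exact List.isChain_cons_cons.2 ⟨hc, ih⟩

lemma rw_toWord (x : FreeGroup ι) : RW x.toWord := by
  rw [← reduce_toWord]; exact rw_reduce _

lemma toWord_mk_rw {w : List (ι × Bool)} (h : RW w) : (mk w).toWord = w := by
  rw [toWord_mk, h.reduce_eq]

lemma invRev_append (w₁ w₂ : List (ι × Bool)) :
    invRev (w₁ ++ w₂) = invRev w₂ ++ invRev w₁ := by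
  simp [invRev]

lemma invRev_eq (w : List (ι × Bool)) : invRev w = (w.map inv1).reverse := rfl

lemma head?_invRev (w : List (ι × Bool)) : (invRev w).head? = w.getLast?.map inv1 := by
  rw [invRev_eq, List.head?_reverse, List.getLast?_map]

lemma getLast?_invRev (w : List (ι × Bool)) : (invRev w).getLast? = w.head?.map inv1 := by
  rw [invRev_eq, List.getLast?_reverse, List.head?_map]

lemma RW.invRev {w : List (ι × Bool)} (h : RW w) : RW (FreeGroup.invRev w) := by
  rw [invRev_eq, RW, List.Chain', List.isChain_reverse, List.isChain_map]
  refine h.imp ?_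
  rintro ⟨p1, p2⟩ ⟨q1, q2⟩ hpq hc
  simp only [inv1] at hc
  refine hpq ⟨hc.1.symm, ?_⟩
  have := hc.2
  revert this; cases p2 <;> cases q2 <;> simp

lemma RW.left {w₁ w₂ : List (ι × Bool)} (h : RW (w₁ ++ w₂)) : RW w₁ :=
  (List.isChain_append.1 h).1

lemma RW.right {w₁ w₂ : List (ι × Bool)} (h : RW (w₁ ++ w₂)) : RW w₂ :=
  (List.isChain_append.1 h).2.1

lemma RW.junction {w₁ w₂ : List (ι × Bool)} (h : RW (w₁ ++ w₂)) :
    ∀ p ∈ w₁.getLast?, ∀ q ∈ w₂.head?, ¬(p.1 = q.1 ∧ p.2 = !q.2) :=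
  (List.isChain_append.1 h).2.2

lemma rw_append {w₁ w₂ : List (ι × Bool)} (h₁ : RW w₁) (h₂ : RW w₂)
    (hj : ∀ p ∈ w₁.getLast?, ∀ q ∈ w₂.head?, ¬(p.1 = q.1 ∧ p.2 = !q.2)) : RW (w₁ ++ w₂) :=
  List.isChain_append.2 ⟨h₁, h₂, hj⟩

lemma rw_replicate (j : ℕ) (s : ι) : RW (List.replicate j (s, true)) := by
  induction j with
  | zero => exact List.isChain_nil
  | succ j ih =>
    rw [List.replicate_succ]
    refine List.isChain_cons.2 ⟨?_, ih⟩
    intro y hy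
    rw [List.head?_replicate] at hy
    rcases Nat.eq_zero_or_pos j with h0 | h0
    · simp [h0] at hy
    · have : y = (s, true) := by
        simp only [Nat.pos_iff_ne_zero.1 h0, if_false] at hy
        exact (Option.some_inj.1 hy).symm
      simp [this]


/-- `x` is (reduced-form) the conjugate `v * t * v⁻¹` with `t` a positive generator. -/
def cdata (x : FreeGroup ι) (v : List (ι × Bool)) (t : ι) : Prop :=
  x.toWord = v ++ (t, true) :: invRev v

lemma cdata.norm_eq {x : FreeGroup ι} {v t} (h : cdata x v t) :
    x.norm = 2 * v.length + 1 := by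
  have hn : x.norm = x.toWord.length := rfl
  rw [hn, h]
  simp [invRev_length]
  omega

lemma cdata.rw {x : FreeGroup ι} {v t} (h : cdata x v t) :
    RW (v ++ (t, true) :: invRev v) := by
  rw [← h]; exact rw_toWord x

lemma cdata.rw_v {x : FreeGroup ι} {v t} (h : cdata x v t) : RW v := h.rw.left

lemma cdata.last_v {x : FreeGroup ι} {v t} (h : cdata x v t) :
    ∀ b, v.getLast? ≠ some (t, b) := by
  intro b hb
  have hrw := h.rw
  cases b
  · -- (t, false) : contradicts junction v · (t,true)
    have := hrw.junction (t, false) hb (t, true) rfl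
    simp at this
  · -- (t, true) : contradicts junction (t,true) · invRev v
    have h2 : RW ([(t, true)] ++ FreeGroup.invRev v) := by
      have : RW (v ++ ([(t, true)] ++ FreeGroup.invRev v)) := by
        simpa using hrw
      exact this.right
    have hh : (FreeGroup.invRev v).head? = some (t, false) := by
      rw [head?_invRev, hb]; rfl
    have := h2.junction (t, true) rfl (t, false) hh
    simp at this

lemma cdata.mk_eq {x : FreeGroup ι} {v t} (h : cdata x v t) :
    x = FreeGroup.mk v * FreeGroup.mk [(t, true)] * (FreeGroup.mk v)⁻¹ := by
  conv_lhs => rw [← mk_toWord (x := x), h]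
  rw [inv_mk, mul_mk, mul_mk]
  simp

lemma cdata.unique {x : FreeGroup ι} {v t w u} (h1 : cdata x v t) (h2 : cdata x w u) :
    v = w ∧ t = u := by
  have he : v ++ (t, true) :: FreeGroup.invRev v = w ++ (u, true) :: FreeGroup.invRev w := by
    rw [← h1, ← h2]
  have hl : v.length = w.length := by
    have := congrArg List.length he
    simp [invRev_length] at this
    omega
  obtain ⟨h3, h4⟩ := List.append_inj he hl
  injection h4 with h5 _
  exact ⟨h3, congrArg Prod.fst h5⟩

lemma cdata_of (i : ι) : cdata (FreeGroup.of i) [] i := by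
  simp [cdata, toWord_of]

lemma mk_single_pow (s : ι) (j : ℕ) :
    (FreeGroup.mk [(s, true)]) ^ j = FreeGroup.mk (List.replicate j (s, true)) := by
  induction j with
  | zero => rw [pow_zero, List.replicate_zero, FreeGroup.one_eq_mk]
  | succ j ih => rw [pow_succ, ih, mul_mk, ← List.replicate_succ']

lemma cdata.pow_eq {a : FreeGroup ι} {u s} (h : cdata a u s) (j : ℕ) :
    a ^ j = FreeGroup.mk u * FreeGroup.mk (List.replicate j (s, true)) * (FreeGroup.mk u)⁻¹ := by
  rw [h.mk_eq, conj_pow, mk_single_pow]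


lemma getLast?_replicate_pos {j : ℕ} (hj : 1 ≤ j) (c : ι × Bool) :
    (List.replicate j c).getLast? = some c := by
  cases j with
  | zero => omega
  | succ j => rw [List.replicate_succ', List.getLast?_concat]

lemma head?_replicate_pos {j : ℕ} (hj : 1 ≤ j) (c : ι × Bool) :
    (List.replicate j c).head? = some c := by
  cases j with
  | zero => omega
  | succ j => rw [List.replicate_succ]; rfl

lemma inv1_eq_iff {c d : ι × Bool} : inv1 c = d ↔ c = inv1 d := by
  obtain ⟨c1, c2⟩ := c
  obtain ⟨d1, d2⟩ := d
  cases c2 <;> cases d2 <;> simp [inv1, Prod.ext_iff]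

lemma conj_rw {V : List (ι × Bool)} {t : ι} (h : RW V)
    (hl : ∀ b, V.getLast? ≠ some (t, b)) :
    RW (V ++ (t, true) :: FreeGroup.invRev V) := by
  have hrw2 : RW ([(t, true)] ++ FreeGroup.invRev V) := by
    refine rw_append (List.isChain_singleton _) h.invRev ?_
    intro pp hp q hq hcon
    obtain rfl : pp = (t, true) := by have := hp; simp at this; exact this.symm
    rw [head?_invRev] at hq
    obtain ⟨c, hc1, hc2⟩ := Option.map_eq_some_iff.1 hq
    obtain ⟨q1, q2⟩ := q
    obtain ⟨h1, h2⟩ := hcon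
    simp only at h1 h2
    have hq2 : q2 = false := by
      cases q2
      · rfl
      · exact absurd h2 (by simp)
    have hc : c = (t, true) := by
      rw [inv1_eq_iff] at hc2
      rw [hc2, hq2, ← h1]
      rfl
    exact hl true (by rw [hc1, hc])
  have : V ++ (t, true) :: FreeGroup.invRev V = V ++ ([(t, true)] ++ FreeGroup.invRev V) := rfl
  rw [this]
  refine rw_append h hrw2 ?_
  intro pp hp q hq hcon
  obtain rfl : q = (t, true) := by have := hq; simp at this; exact this.symm
  obtain ⟨p1, p2⟩ := pp
  simp at hcon
  obtain ⟨h1, h2⟩ := hcon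
  exact hl false (by rw [h1, h2] at hp; exact hp)

section Key1

variable {a x : FreeGroup ι} {u v p u' v' : List (ι × Bool)} {s t : ι}

/-- the head of `invRev u' ++ v'` is never `(s, b)`. -/
lemma zhead (hca : cdata a u s) (hcx : cdata x v t)
    (hu : u = p ++ u') (hv : v = p ++ v')
    (hPax : ∀ b, ¬(u ++ [(s, b)] <+: v)) :
    ∀ b, (FreeGroup.invRev u' ++ v').head? ≠ some (s, b) := by
  intro b hb
  rcases eq_or_ne u' [] with h0 | h0
  · subst h0
    rw [invRev_empty, List.nil_append] at hb
    obtain ⟨l, rfl⟩ : ∃ l, v' = (s, b) :: l := by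
      cases v' with
      | nil => simp at hb
      | cons c l => exact ⟨l, by simp at hb; rw [hb]⟩
    refine hPax b ⟨l, ?_⟩
    rw [hv, hu]
    simp
  · have hne : FreeGroup.invRev u' ≠ [] := by
      intro hc
      have := congrArg List.length hc
      rw [invRev_length] at this
      exact h0 (List.length_eq_zero_iff.1 this)
    rw [List.head?_append_of_ne_nil _ hne, head?_invRev] at hb
    obtain ⟨c, hc1, hc2⟩ := Option.map_eq_some_iff.1 hb
    have hcl : u.getLast? = some c := by
      rw [hu, List.getLast?_append_of_ne_nil _ h0, hc1]
    have hc : c = (s, !b) := by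
      have := inv1_eq_iff.1 hc2
      simpa [inv1] using this
    exact hca.last_v (!b) (hc ▸ hcl)

/-- the new conjugating word for `a^j * x * a^{-j}`. -/
def newConj (u u' v' : List (ι × Bool)) (s : ι) (j : ℕ) : List (ι × Bool) :=
  u ++ List.replicate j (s, true) ++ (FreeGroup.invRev u' ++ v')

lemma key1 {j : ℕ}
    (hj : 1 ≤ j) (hca : cdata a u s) (hcx : cdata x v t) (hne : x ≠ a)
    (hu : u = p ++ u') (hv : v = p ++ v')
    (hdiv : ∀ c, u'.head? = some c → v'.head? ≠ some c)
    (hPax : ∀ b, ¬(u ++ [(s, b)] <+: v)) (hPxa : ∀ b, ¬(v ++ [(t, b)] <+: u)) :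
    cdata (a ^ j * x * (a ^ j)⁻¹) (newConj u u' v' s j) t := by
  have rwu : RW u := hca.rw_v
  have rwv : RW v := hcx.rw_v
  have rwu' : RW u' := by rw [hu] at rwu; exact rwu.right
  have rwv' : RW v' := by rw [hv] at rwv; exact rwv.right
  have rwu2 : RW u := hca.rw_v
  have lastu := hca.last_v
  have lastv := hcx.last_v
  have hZ : ∀ b, (FreeGroup.invRev u' ++ v').head? ≠ some (s, b) :=
    zhead hca hcx hu hv hPax
  have hrepne : List.replicate j ((s : ι), true) ≠ [] := by
    simp only [ne_eq, List.replicate_eq_nil_iff]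
    omega
  -- reducedness of Z = invRev u' ++ v'
  have rwZ : RW (FreeGroup.invRev u' ++ v') := by
    refine rw_append rwu'.invRev rwv' ?_
    intro pp hp q hq hcon
    rw [getLast?_invRev] at hp
    obtain ⟨c, hc1, hc2⟩ := Option.map_eq_some_iff.1 hp
    have hqc : q = c := by
      subst hc2
      obtain ⟨c1, c2⟩ := c
      obtain ⟨q1, q2⟩ := q
      simp [inv1] at hcon
      obtain ⟨h1, h2⟩ := hcon
      cases c2 <;> cases q2 <;> simp_all [inv1]
    exact hdiv c hc1 (hqc ▸ hq)
  -- reducedness of replicate ++ Z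
  have rwRZ : RW (List.replicate j (s, true) ++ (FreeGroup.invRev u' ++ v')) := by
    refine rw_append (rw_replicate j s) rwZ ?_
    intro pp hp q hq hcon
    rw [getLast?_replicate_pos hj] at hp
    obtain rfl : pp = (s, true) := by injection hp with h; exact h.symm
    refine hZ false ?_
    rw [hq]
    obtain ⟨q1, q2⟩ := q
    simp at hcon
    obtain ⟨h1, h2⟩ := hcon
    simp [h1, h2]
  -- reducedness of W₀
  have rwW0 : RW (newConj u u' v' s j) := by
    rw [newConj, List.append_assoc]
    refine rw_append rwu rwRZ ?_
    intro pp hp q hq hcon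
    rw [List.head?_append_of_ne_nil _ hrepne, head?_replicate_pos hj] at hq
    obtain rfl : q = (s, true) := by injection hq with h; exact h.symm
    obtain ⟨p1, p2⟩ := pp
    simp at hcon
    obtain ⟨h1, h2⟩ := hcon
    exact lastu false (by rw [h1, h2] at hp; exact hp)
  -- last letter of W₀ avoids t
  have lastW0 : ∀ b, (newConj u u' v' s j).getLast? ≠ some (t, b) := by
    intro b hb
    rw [newConj] at hb
    rcases eq_or_ne v' [] with h0v | h0v
    · rcases eq_or_ne u' [] with h0u | h0u
      · -- u' = v' = [] : last letter is (s, true), so s = t, u = v, x = a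
        subst h0v; subst h0u
        simp only [invRev_empty, List.append_nil] at hb
        rw [List.getLast?_append_of_ne_nil _ hrepne, getLast?_replicate_pos hj] at hb
        injection hb with hb'
        have hst : s = t := congrArg Prod.fst hb'
        have huv : u = v := by rw [hu, hv]
        exact hne (toWord_injective (by rw [hcx, hca, hst, huv]))
      · -- v' = [], u' ≠ [] : last letter is inv1 (head of u'), use hPxa
        subst h0v
        simp only [List.append_nil] at hb
        have hne2 : FreeGroup.invRev u' ≠ [] := by
          intro hc
          have := congrArg List.length hc
          rw [invRev_length] at this
          exact h0u (List.length_eq_zero_iff.1 this)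
        rw [List.getLast?_append_of_ne_nil _ hne2, getLast?_invRev] at hb
        obtain ⟨c, hc1, hc2⟩ := Option.map_eq_some_iff.1 hb
        have hc : c = (t, !b) := by
          have := inv1_eq_iff.1 hc2
          simpa [inv1] using this
        subst hc
        obtain ⟨l, hl⟩ : ∃ l, u' = (t, !b) :: l := by
          cases u' with
          | nil => simp at hc1
          | cons d l => exact ⟨l, by simp at hc1; rw [hc1]⟩
        refine hPxa (!b) ⟨l, ?_⟩
        rw [hu, hl, hv]
        simp
    · -- v' ≠ [] : last letter is the last letter of v
      rw [List.getLast?_append_of_ne_nil _ (by simp [h0v]),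
        List.getLast?_append_of_ne_nil _ h0v] at hb
      apply lastv b
      rw [hv, List.getLast?_append_of_ne_nil _ h0v, hb]
  -- the group identity
  have hmkW : FreeGroup.mk (newConj u u' v' s j) =
      FreeGroup.mk u * FreeGroup.mk (List.replicate j (s, true)) *
        (FreeGroup.mk u')⁻¹ * FreeGroup.mk v' := by
    rw [inv_mk, mul_mk, mul_mk, mul_mk, newConj]
    simp [List.append_assoc]
  have hg : a ^ j * x * (a ^ j)⁻¹ =
      FreeGroup.mk (newConj u u' v' s j) * FreeGroup.mk [(t, true)] *
        (FreeGroup.mk (newConj u u' v' s j))⁻¹ := by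
    rw [hca.pow_eq j, hcx.mk_eq, hmkW]
    have hU : FreeGroup.mk u = FreeGroup.mk p * FreeGroup.mk u' := by rw [mul_mk, ← hu]
    have hV : FreeGroup.mk v = FreeGroup.mk p * FreeGroup.mk v' := by rw [mul_mk, ← hv]
    rw [hU, hV]
    group
  show (a ^ j * x * (a ^ j)⁻¹).toWord = _
  rw [hg, inv_mk, mul_mk, mul_mk]
  have hlist : (newConj u u' v' s j ++ [(t, true)]) ++ FreeGroup.invRev (newConj u u' v' s j)
      = newConj u u' v' s j ++ (t, true) :: FreeGroup.invRev (newConj u u' v' s j) := by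
    simp
  rw [hlist, toWord_mk_rw (conj_rw rwW0 lastW0)]

lemma key1_norm {j : ℕ}
    (hca : cdata a u s) (hcx : cdata x v t)
    (hu : u = p ++ u') (hv : v = p ++ v')
    (hkey : cdata (a ^ j * x * (a ^ j)⁻¹) (newConj u u' v' s j) t) :
    (a ^ j * x * (a ^ j)⁻¹).norm = x.norm + 2 * j + 4 * u'.length := by
  rw [hkey.norm_eq, hcx.norm_eq, newConj]
  have h1 : u.length = p.length + u'.length := by rw [hu]; simp
  have h2 : v.length = p.length + v'.length := by rw [hv]; simp
  simp [invRev_length, h1, h2]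
  omega

end Key1


/-- a nonempty list is not a prefix of `[]`. -/
lemma not_cons_prefix_nil {c : ι × Bool} {l : List (ι × Bool)} : ¬((c :: l) <+: ([] : List (ι × Bool))) := by
  intro h
  have := h.length_le
  simp at this

lemma head_eq_of_cons_prefix {c d : ι × Bool} {l₁ l₂ : List (ι × Bool)}
    (h : (c :: l₁) <+: (d :: l₂)) : c = d :=
  (List.cons_prefix_cons.1 h).1

/-- junction fact: in a reduced word `p ++ d :: l`, `d` is not the inverse of the
last letter of `p`. -/
lemma RW.head_ne_inv_last {p : List (ι × Bool)} {d : ι × Bool} {l : List (ι × Bool)}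
    (h : RW (p ++ d :: l)) {c : ι × Bool} (hc : p.getLast? = some c) : d ≠ inv1 c := by
  intro hd
  have := h.junction c hc d rfl
  apply this
  rw [hd]
  obtain ⟨c1, c2⟩ := c
  simp [inv1]

lemma strip {A X Y : List (ι × Bool)} (h : A ++ X <+: A ++ Y) : X <+: Y :=
  (List.prefix_append_right_inj A).1 h

lemma invRev_ne_nil {l : List (ι × Bool)} (h : l ≠ []) : FreeGroup.invRev l ≠ [] := by
  intro hc
  have := congrArg List.length hc
  rw [invRev_length] at this
  exact h (List.length_eq_zero_iff.1 this)

lemma invRev_nil_iff {l : List (ι × Bool)} : FreeGroup.invRev l = [] ↔ l = [] := by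
  constructor
  · intro hc
    by_contra h
    exact invRev_ne_nil h hc
  · rintro rfl
    rfl

section PairLemmas

variable {u Z : List (ι × Bool)} {s : ι}

/-- pair condition, new element vs old element -/
lemma pair10 {w : List (ι × Bool)} (hPay : ¬(u ++ [(s, true)] <+: w)) {j : ℕ} (hj : 1 ≤ j)
    (u' v' : List (ι × Bool)) (c : ι × Bool) :
    ¬(newConj u u' v' s j ++ [c] <+: w) := by
  intro h
  apply hPay
  refine List.IsPrefix.trans ?_ h
  obtain ⟨j', rfl⟩ : ∃ j', j = j' + 1 := ⟨j - 1, by omega⟩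
  rw [newConj, List.replicate_succ]
  refine ⟨List.replicate j' (s, true) ++ (FreeGroup.invRev u' ++ v') ++ [c], ?_⟩
  simp

/-- pair condition, old element vs new element -/
lemma pair01 {vx : List (ι × Bool)} {tx : ι}
    (hPxa : ∀ b, ¬(vx ++ [(tx, b)] <+: u))
    (hPax : ¬(u ++ [(s, true)] <+: vx))
    (hnotxa : ¬(vx = u ∧ tx = s))
    {k : ℕ} (hk : 1 ≤ k) (b : Bool) :
    ¬(vx ++ [(tx, b)] <+: u ++ List.replicate k (s, true) ++ Z) := by
  intro h
  obtain ⟨k', rfl⟩ : ∃ k', k = k' + 1 := ⟨k - 1, by omega⟩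
  rw [List.append_assoc] at h
  have hvx : vx <+: u ++ (List.replicate (k' + 1) (s, true) ++ Z) :=
    (List.prefix_append vx [(tx, b)]).trans h
  have hu : u <+: u ++ (List.replicate (k' + 1) (s, true) ++ Z) :=
    List.prefix_append u _
  rcases List.prefix_or_prefix_of_prefix hvx hu with h1 | h2
  · obtain ⟨d, hd⟩ := h1
    cases d with
    | nil =>
      rw [List.append_nil] at hd
      subst hd
      have h3 : [((tx : ι), b)] <+: List.replicate (k' + 1) (s, true) ++ Z := strip h
      rw [List.replicate_succ, List.cons_append] at h3
      have hc : ((tx : ι), b) = (s, true) := head_eq_of_cons_prefix h3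
      exact hnotxa ⟨rfl, congrArg Prod.fst hc⟩
    | cons e l =>
      -- u = vx ++ e :: l
      have h4 : vx ++ [((tx : ι), b)] <+:
          vx ++ (e :: (l ++ (List.replicate (k' + 1) (s, true) ++ Z))) := by
        have he : u ++ (List.replicate (k' + 1) (s, true) ++ Z) =
            vx ++ (e :: (l ++ (List.replicate (k' + 1) (s, true) ++ Z))) := by
          rw [← hd]; simp
        rw [← he]; exact h
      have hc : ((tx : ι), b) = e := head_eq_of_cons_prefix (strip h4)
      refine hPxa b ⟨l, ?_⟩
      rw [← hd, hc]
      simp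
  · obtain ⟨d, hd⟩ := h2
    cases d with
    | nil =>
      rw [List.append_nil] at hd
      subst hd
      have h3 : [((tx : ι), b)] <+: List.replicate (k' + 1) (s, true) ++ Z := strip h
      rw [List.replicate_succ, List.cons_append] at h3
      have hc : ((tx : ι), b) = (s, true) := head_eq_of_cons_prefix h3
      exact hnotxa ⟨rfl, congrArg Prod.fst hc⟩
    | cons e l =>
      -- vx = u ++ e :: l
      have h4 : u ++ (e :: (l ++ [((tx : ι), b)])) <+:
          u ++ ((s, true) :: (List.replicate k' (s, true) ++ Z)) := by
        have h5 : vx ++ [((tx : ι), b)] = u ++ (e :: (l ++ [((tx : ι), b)])) := by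
          rw [← hd]; simp
        have h6 : u ++ (List.replicate (k' + 1) (s, true) ++ Z) =
            u ++ ((s, true) :: (List.replicate k' (s, true) ++ Z)) := by
          rw [List.replicate_succ]; simp
        rw [h5, h6] at h
        exact h
      have hc : e = (s, true) := head_eq_of_cons_prefix (strip h4)
      refine hPax ⟨l, ?_⟩
      rw [← hd, hc]
      simp

/-- pair condition, new vs new -/
lemma pair11 {px ux' vx' py uy' vy' vx vy : List (ι × Bool)} {tx : ι}
    (hux : u = px ++ ux') (hvx : vx = px ++ vx')
    (huy : u = py ++ uy') (hvy : vy = py ++ vy')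
    (rwvx : RW vx) (rwvy : RW vy)
    (lastvx : ∀ b, vx.getLast? ≠ some (tx, b))
    (hzx : ∀ b, (FreeGroup.invRev ux' ++ vx').head? ≠ some (s, b))
    (hzy : ∀ b, (FreeGroup.invRev uy' ++ vy').head? ≠ some (s, b))
    (hPxy : ∀ b, ¬(vx ++ [(tx, b)] <+: vy))
    (hnotxa : ¬(vx = u ∧ tx = s))
    {j k : ℕ} (hj : 1 ≤ j) (hk : 1 ≤ k) (b : Bool) :
    ¬(newConj u ux' vx' s j ++ [(tx, b)] <+: newConj u uy' vy' s k) := by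
  intro h
  have h1 : List.replicate j (s, true) ++ ((FreeGroup.invRev ux' ++ vx') ++ [(tx, b)]) <+:
      List.replicate k (s, true) ++ (FreeGroup.invRev uy' ++ vy') := by
    apply strip (A := u)
    simpa [newConj, List.append_assoc] using h
  rcases lt_trichotomy j k with hjk | rfl | hjk
  · -- j < k
    obtain ⟨m, rfl⟩ : ∃ m, k = j + (m + 1) := ⟨k - j - 1, by omega⟩
    have h1' : List.replicate j (s, true) ++ ((FreeGroup.invRev ux' ++ vx') ++ [((tx : ι), b)]) <+:
        List.replicate j (s, true) ++
          ((s, true) :: (List.replicate m (s, true) ++ (FreeGroup.invRev uy' ++ vy'))) := by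
      have he : List.replicate (j + (m + 1)) ((s : ι), true) ++ (FreeGroup.invRev uy' ++ vy') =
          List.replicate j (s, true) ++
            ((s, true) :: (List.replicate m (s, true) ++ (FreeGroup.invRev uy' ++ vy'))) := by
        rw [List.replicate_add, List.replicate_succ]
        simp
      rw [he] at h1
      exact h1
    have h2 := strip h1'
    cases hZx : (FreeGroup.invRev ux' ++ vx') with
    | nil =>
      rw [hZx, List.nil_append] at h2
      have hc : ((tx : ι), b) = (s, true) := head_eq_of_cons_prefix h2
      obtain ⟨hx1, hx2⟩ := List.append_eq_nil_iff.1 hZx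
      apply hnotxa
      refine ⟨?_, congrArg Prod.fst hc⟩
      rw [hvx, hux, invRev_nil_iff.1 hx1, hx2]
    | cons d l =>
      rw [hZx, List.cons_append] at h2
      have hc : d = (s, true) := head_eq_of_cons_prefix h2
      exact hzx true (by rw [hZx, hc]; rfl)
  · -- j = k : the essential case
    have h2 : (FreeGroup.invRev ux' ++ vx') ++ [((tx : ι), b)] <+:
        FreeGroup.invRev uy' ++ vy' := strip h1
    have hee : px ++ ux' = py ++ uy' := hux.symm.trans huy
    rcases List.append_eq_append_iff.1 hee with ⟨e, hpy, hux'⟩ | ⟨e, hpx, huy'⟩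
    · -- py = px ++ e, ux' = e ++ uy'
      have h3 : FreeGroup.invRev e ++ (vx' ++ [((tx : ι), b)]) <+: vy' := by
        apply strip (A := FreeGroup.invRev uy')
        rw [hux', invRev_append] at h2
        simpa [List.append_assoc] using h2
      rcases eq_or_ne e [] with rfl | hene
      · rw [invRev_empty, List.nil_append] at h3
        rw [List.append_nil] at hpy
        refine hPxy b ?_
        rw [hvx, hvy, ← hpy, List.append_assoc]
        exact (List.prefix_append_right_inj py).2 h3
      · obtain ⟨c0, hc0⟩ : ∃ c0, e.getLast? = some c0 :=
          Option.isSome_iff_exists.1 (List.getLast?_isSome.2 hene)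
        have hlastpy : py.getLast? = some c0 := by
          rw [hpy, List.getLast?_append_of_ne_nil _ hene, hc0]
        obtain ⟨ie, hie⟩ : ∃ ie, FreeGroup.invRev e = inv1 c0 :: ie := by
          have hh : (FreeGroup.invRev e).head? = some (inv1 c0) := by
            rw [head?_invRev, hc0]; rfl
          cases hi : FreeGroup.invRev e with
          | nil => exact absurd hi (invRev_ne_nil hene)
          | cons i0 il =>
            rw [hi] at hh
            simp only [List.head?_cons, Option.some_inj] at hh
            exact ⟨il, by rw [hh]⟩
        cases hvy' : vy' with
        | nil =>
          rw [hvy', hie, List.cons_append] at h3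
          exact not_cons_prefix_nil h3
        | cons d2 l2 =>
          rw [hvy', hie, List.cons_append] at h3
          have hd2 : inv1 c0 = d2 := head_eq_of_cons_prefix h3
          have hrw : RW (py ++ d2 :: l2) := by rw [← hvy', ← hvy]; exact rwvy
          exact (hrw.head_ne_inv_last hlastpy) hd2.symm
    · -- px = py ++ e, uy' = e ++ ux'
      have h3 : vx' ++ [((tx : ι), b)] <+: FreeGroup.invRev e ++ vy' := by
        apply strip (A := FreeGroup.invRev ux')
        rw [huy', invRev_append] at h2
        simpa [List.append_assoc] using h2
      rcases eq_or_ne e [] with rfl | hene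
      · rw [invRev_empty, List.nil_append] at h3
        rw [List.append_nil] at hpx
        refine hPxy b ?_
        rw [hvx, hvy, hpx, List.append_assoc]
        exact (List.prefix_append_right_inj py).2 h3
      · obtain ⟨c0, hc0⟩ : ∃ c0, e.getLast? = some c0 :=
          Option.isSome_iff_exists.1 (List.getLast?_isSome.2 hene)
        have hlastpx : px.getLast? = some c0 := by
          rw [hpx, List.getLast?_append_of_ne_nil _ hene, hc0]
        obtain ⟨ie, hie⟩ : ∃ ie, FreeGroup.invRev e = inv1 c0 :: ie := by
          have hh : (FreeGroup.invRev e).head? = some (inv1 c0) := by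
            rw [head?_invRev, hc0]; rfl
          cases hi : FreeGroup.invRev e with
          | nil => exact absurd hi (invRev_ne_nil hene)
          | cons i0 il =>
            rw [hi] at hh
            simp only [List.head?_cons, Option.some_inj] at hh
            exact ⟨il, by rw [hh]⟩
        cases hvx' : vx' with
        | nil =>
          rw [hvx', hie, List.nil_append, List.cons_append] at h3
          have hc : ((tx : ι), b) = inv1 c0 := head_eq_of_cons_prefix h3
          have hc0' : c0 = (tx, !b) := by
            have h5 := inv1_eq_iff.1 hc.symm
            simpa [inv1] using h5
          apply lastvx (!b)
          rw [hvx, hvx', List.append_nil, hlastpx, hc0']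
        | cons d2 l2 =>
          rw [hvx', hie, List.cons_append] at h3
          have hd2 : d2 = inv1 c0 := head_eq_of_cons_prefix h3
          have hrw : RW (px ++ d2 :: l2) := by rw [← hvx', ← hvx]; exact rwvx
          exact (hrw.head_ne_inv_last hlastpx) hd2
  · -- k < j
    obtain ⟨m, rfl⟩ : ∃ m, j = k + (m + 1) := ⟨j - k - 1, by omega⟩
    have h1' : List.replicate k (s, true) ++
          ((s, true) :: (List.replicate m (s, true) ++ ((FreeGroup.invRev ux' ++ vx') ++ [((tx : ι), b)]))) <+:
        List.replicate k (s, true) ++ (FreeGroup.invRev uy' ++ vy') := by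
      have he : List.replicate (k + (m + 1)) ((s : ι), true) ++
            ((FreeGroup.invRev ux' ++ vx') ++ [((tx : ι), b)]) =
          List.replicate k (s, true) ++
            ((s, true) :: (List.replicate m (s, true) ++ ((FreeGroup.invRev ux' ++ vx') ++ [((tx : ι), b)]))) := by
        rw [List.replicate_add, List.replicate_succ]
        simp
      rw [he] at h1
      exact h1
    have h2 := strip h1'
    cases hZy : (FreeGroup.invRev uy' ++ vy') with
    | nil =>
      rw [hZy] at h2
      exact not_cons_prefix_nil h2
    | cons d l =>
      rw [hZy] at h2
      have hd : (s, true) = d := head_eq_of_cons_prefix h2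
      exact hzy true (by rw [hZy, ← hd]; rfl)

end PairLemmas


/-- The invariant: every element is a reduced conjugate of a positive generator, and
the marked edges `(v_x, t_x^{±1})` are avoided by all other conjugators. -/
def Good (S : Set (FreeGroup ι)) : Prop :=
  (∀ x ∈ S, ∃ v t, cdata x v t) ∧
  (∀ x ∈ S, ∀ y ∈ S, ∀ v t w r, cdata x v t → cdata y w r →
    ∀ b, ¬((v ++ [(t, b)]) <+: w))

lemma exists_lcp (u v : List (ι × Bool)) :
    ∃ p u' v', u = p ++ u' ∧ v = p ++ v' ∧
      ∀ c, u'.head? = some c → v'.head? ≠ some c := by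
  induction u generalizing v with
  | nil => exact ⟨[], [], v, rfl, rfl, by simp⟩
  | cons a0 u ih =>
    cases v with
    | nil => exact ⟨[], a0 :: u, [], rfl, rfl, by simp⟩
    | cons b0 v =>
      by_cases hab : a0 = b0
      · obtain ⟨p, u', v', h1, h2, h3⟩ := ih v
        subst hab
        exact ⟨a0 :: p, u', v', by rw [List.cons_append, ← h1],
          by rw [List.cons_append, ← h2], h3⟩
      · refine ⟨[], a0 :: u, b0 :: v, rfl, rfl, ?_⟩
        intro c h1 h2
        apply hab
        have e1 : a0 = c := Option.some_inj.1 h1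
        have e2 : b0 = c := Option.some_inj.1 h2
        rw [e1, e2]

lemma cdata_eq_of {x a : FreeGroup ι} {v u : List (ι × Bool)} {t s : ι}
    (hcx : cdata x v t) (hca : cdata a u s) (h1 : v = u) (h2 : t = s) : x = a :=
  toWord_injective (by rw [hcx, hca, h1, h2])

lemma step {S S' : Set (FreeGroup ι)} {aa : FreeGroup ι}
    (haa : aa ∈ S) (hG : Good S)
    (hS' : S' = {g | ∃ x ∈ S, x ≠ aa ∧ ∃ j : ℕ, g = aa ^ j * x * (aa ^ j)⁻¹}) :
    Good S' ∧ ∀ g ∈ S', (g ∈ S ∧ g ≠ aa) ∨ ∃ x ∈ S, x.norm < g.norm := by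
  obtain ⟨u, s, hca⟩ := hG.1 aa haa
  have main : ∀ g ∈ S', ∃ x, x ∈ S ∧ x ≠ aa ∧
      (g = x ∨ ∃ j, 1 ≤ j ∧ ∃ p u' v' v t, cdata x v t ∧ u = p ++ u' ∧ v = p ++ v' ∧
        (∀ c, u'.head? = some c → v'.head? ≠ some c) ∧
        cdata g (newConj u u' v' s j) t ∧ x.norm < g.norm) := by
    intro g hg
    rw [hS'] at hg
    obtain ⟨x, hx, hxa, j, rfl⟩ := hg
    refine ⟨x, hx, hxa, ?_⟩
    cases j with
    | zero => left; simp
    | succ j' =>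
      right
      obtain ⟨v, t, hcx⟩ := hG.1 x hx
      obtain ⟨p, u', v', hu, hv, hdiv⟩ := exists_lcp u v
      have hPax : ∀ b, ¬(u ++ [(s, b)] <+: v) := fun b => hG.2 aa haa x hx u s v t hca hcx b
      have hPxa : ∀ b, ¬(v ++ [(t, b)] <+: u) := fun b => hG.2 x hx aa haa v t u s hcx hca b
      have hj : 1 ≤ j' + 1 := by omega
      have hkey := key1 hj hca hcx hxa hu hv hdiv hPax hPxa
      have hnorm := key1_norm hca hcx hu hv hkey
      refine ⟨j' + 1, hj, p, u', v', v, t, hcx, hu, hv, hdiv, hkey, ?_⟩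
      rw [hnorm]
      omega
  constructor
  · constructor
    · -- existence of cdata
      intro g hg
      obtain ⟨x, hx, hxa, hcase⟩ := main g hg
      rcases hcase with rfl | ⟨j, hj, p, u', v', v, t, hcx, hu, hv, hdiv, hkey, hlt⟩
      · exact hG.1 g hx
      · exact ⟨_, _, hkey⟩
    · -- the pairwise condition
      intro g hg h hh V T W R hcV hcW b
      obtain ⟨x, hx, hxa, hcaseg⟩ := main g hg
      obtain ⟨y, hy, hya, hcaseh⟩ := main h hh
      rcases hcaseg with rfl | ⟨j, hj, px, ux', vx', vx, tx, hcx, hux, hvx, hdivx, hkeyx, hltx⟩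
      · -- g = x is an old element
        rcases hcaseh with rfl | ⟨k, hk, py, uy', vy', vy, ty, hcy, huy, hvy, hdivy, hkeyy, hlty⟩
        · exact hG.2 g hx h hy V T W R hcV hcW b
        · -- h is new
          obtain ⟨hW, hR⟩ := hcW.unique hkeyy
          rw [hW]
          have hPxa : ∀ b, ¬(V ++ [(T, b)] <+: u) :=
            fun b => hG.2 g hx aa haa V T u s hcV hca b
          have hPax : ¬(u ++ [(s, true)] <+: V) :=
            hG.2 aa haa g hx u s V T hca hcV true
          have hnotxa : ¬(V = u ∧ T = s) := by
            rintro ⟨e1, e2⟩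
            exact hxa (cdata_eq_of hcV hca e1 e2)
          exact pair01 hPxa hPax hnotxa hk b
      · -- g is new
        obtain ⟨hV, hT⟩ := hcV.unique hkeyx
        rw [hV, hT]
        rcases hcaseh with rfl | ⟨k, hk, py, uy', vy', vy, ty, hcy, huy, hvy, hdivy, hkeyy, hlty⟩
        · -- h = y is old
          have hPay : ¬(u ++ [(s, true)] <+: W) :=
            hG.2 aa haa h hy u s W R hca hcW true
          exact pair10 hPay hj ux' vx' (tx, b)
        · -- both new
          obtain ⟨hW, hR⟩ := hcW.unique hkeyy
          rw [hW]
          have hPax : ∀ b, ¬(u ++ [(s, b)] <+: vx) :=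
            fun b => hG.2 aa haa x hx u s vx tx hca hcx b
          have hPay : ∀ b, ¬(u ++ [(s, b)] <+: vy) :=
            fun b => hG.2 aa haa y hy u s vy ty hca hcy b
          have hzx := zhead hca hcx hux hvx hPax
          have hzy := zhead hca hcy huy hvy hPay
          have hPxy : ∀ b, ¬(vx ++ [(tx, b)] <+: vy) :=
            fun b => hG.2 x hx y hy vx tx vy ty hcx hcy b
          have hnotxa : ¬(vx = u ∧ tx = s) := by
            rintro ⟨e1, e2⟩
            exact hxa (cdata_eq_of hcx hca e1 e2)
          exact pair11 hux hvx huy hvy hcx.rw_v hcy.rw_v hcx.last_v hzx hzy hPxy hnotxa hj hk b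
  · -- norm estimate
    intro g hg
    obtain ⟨x, hx, hxa, hcase⟩ := main g hg
    rcases hcase with rfl | ⟨j, hj, p, u', v', v, t, hcx, hu, hv, hdiv, hkey, hlt⟩
    · exact Or.inl ⟨hx, hxa⟩
    · exact Or.inr ⟨x, hx, hlt⟩


lemma good_range : Good (Set.range (FreeGroup.of : ι → FreeGroup ι)) := by
  constructor
  · rintro x ⟨i, rfl⟩
    exact ⟨[], i, cdata_of i⟩
  · rintro x ⟨i, rfl⟩ y ⟨i2, rfl⟩ v t w r hcv hcw b
    obtain ⟨h1, h2⟩ := hcv.unique (cdata_of i)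
    obtain ⟨h3, h4⟩ := hcw.unique (cdata_of i2)
    rw [h1, h3]
    intro hpre
    rw [List.nil_append] at hpre
    exact not_cons_prefix_nil hpre

lemma finite_norm_eq [Finite ι] (n : ℕ) :
    {x : FreeGroup ι | FreeGroup.norm x = n}.Finite := by
  have h1 : {x : FreeGroup ι | FreeGroup.norm x = n} ⊆
      FreeGroup.toWord ⁻¹' {l : List (ι × Bool) | l.length = n} := fun x hx => hx
  refine Set.Finite.subset ?_ h1
  exact (List.finite_length_eq _ n).preimage (Set.injOn_of_injective toWord_injective)

end StmtAux

/-- Let `G` be a free group on a finite set `S₀`, and define the chain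
of free generating sets `S i` by: `a i ∈ S i` is a chosen element of smallest reduced
word length, and `S (i+1) = {(a i)^j * x * (a i)^{-j} : x ∈ S i \ {a i}, j ≥ 0}` (a free
generating set for the normal closure of `S i \ {a i}`).  Then for every positive `r`
there is a positive `m` such that `S m` contains no element of word length smaller than
`r`. -/
theorem min_length_of_generating_sets_tendsto_infinity
    (ι : Type*) [Finite ι] [DecidableEq ι]
    (S : ℕ → Set (FreeGroup ι)) (a : ℕ → FreeGroup ι)
    (hS0 : S 0 = Set.range FreeGroup.of)
    (ha : ∀ i, a i ∈ S i)
    (hmin : ∀ i, ∀ x ∈ S i, FreeGroup.norm (a i) ≤ FreeGroup.norm x)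
    (hSsucc : ∀ i, S (i + 1) =
      {g | ∃ x ∈ S i, x ≠ a i ∧ ∃ j : ℕ, g = (a i) ^ j * x * ((a i) ^ j)⁻¹}) :
    ∀ r : ℕ, 0 < r → ∃ m : ℕ, 0 < m ∧ ∀ x ∈ S m, r ≤ FreeGroup.norm x := by
  intro r hr
  have hGood : ∀ i, StmtAux.Good (S i) := by
    intro i
    induction i with
    | zero => rw [hS0]; exact StmtAux.good_range (ι := ι)
    | succ i ih => exact (StmtAux.step (ha i) ih (hSsucc i)).1
  have hstep2 : ∀ i, ∀ g ∈ S (i + 1),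
      (g ∈ S i ∧ g ≠ a i) ∨ ∃ x ∈ S i, FreeGroup.norm x < FreeGroup.norm g :=
    fun i => (StmtAux.step (ha i) (hGood i) (hSsucc i)).2
  set μ : ℕ → ℕ := fun i => FreeGroup.norm (a i) with hμ
  have hmono : ∀ i, μ i ≤ μ (i + 1) := by
    intro i
    rcases hstep2 i (a (i + 1)) (ha (i + 1)) with ⟨h1, _⟩ | ⟨x, hx, hlt⟩
    · exact hmin i _ h1
    · exact le_of_lt (lt_of_le_of_lt (hmin i x hx) hlt)
  have hmono' : ∀ i j, i ≤ j → μ i ≤ μ j := fun i j hij =>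
    monotone_nat_of_le_succ hmono hij
  have key : ∀ i, ∃ m, i < m ∧ μ i < μ m := by
    intro i
    by_contra hcon
    push_neg at hcon
    have hconst : ∀ k, μ (i + k) = μ i := by
      intro k
      cases k with
      | zero => rfl
      | succ k => exact le_antisymm (hcon _ (by omega)) (hmono' i _ (by omega))
    have hFfin : ∀ k, {x | x ∈ S k ∧ FreeGroup.norm x = μ i}.Finite := fun k =>
      (StmtAux.finite_norm_eq (μ i)).subset fun x hx => hx.2
    have hsub : ∀ k, {x | x ∈ S (i + k + 1) ∧ FreeGroup.norm x = μ i} ⊆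
        {x | x ∈ S (i + k) ∧ FreeGroup.norm x = μ i} \ {a (i + k)} := by
      intro k g hgmem
      obtain ⟨hg, hn⟩ := hgmem
      rcases hstep2 (i + k) g hg with ⟨h1, h2⟩ | ⟨x, hx, hlt⟩
      · simp only [Set.mem_diff, Set.mem_setOf_eq, Set.mem_singleton_iff]
        exact ⟨⟨h1, hn⟩, h2⟩
      · exfalso
        have h3 := hmin (i + k) x hx
        have h4 := hconst k
        have h5 : μ (i + k) = FreeGroup.norm (a (i + k)) := rfl
        omega
    have hmem : ∀ k, a (i + k) ∈ {x | x ∈ S (i + k) ∧ FreeGroup.norm x = μ i} := fun k =>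
      ⟨ha _, hconst k⟩
    have hcard : ∀ k, {x | x ∈ S (i + k) ∧ FreeGroup.norm x = μ i}.ncard + k ≤
        {x | x ∈ S i ∧ FreeGroup.norm x = μ i}.ncard := by
      intro k
      induction k with
      | zero => simp
      | succ k ihk =>
        have h1 : {x | x ∈ S (i + (k + 1)) ∧ FreeGroup.norm x = μ i}.ncard ≤
            ({x | x ∈ S (i + k) ∧ FreeGroup.norm x = μ i} \ {a (i + k)}).ncard := by
          refine Set.ncard_le_ncard ?_ ((hFfin (i + k)).diff)
          exact hsub k
        have h2 : ({x | x ∈ S (i + k) ∧ FreeGroup.norm x = μ i} \ {a (i + k)}).ncard =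
            {x | x ∈ S (i + k) ∧ FreeGroup.norm x = μ i}.ncard - 1 :=
          Set.ncard_diff_singleton_of_mem (hmem k)
        have h3 : 0 < {x | x ∈ S (i + k) ∧ FreeGroup.norm x = μ i}.ncard :=
          (Set.ncard_pos (hFfin (i + k))).2 ⟨a (i + k), hmem k⟩
        omega
    have := hcard ({x | x ∈ S i ∧ FreeGroup.norm x = μ i}.ncard + 1)
    omega
  have grow : ∀ r' : ℕ, ∃ m, 1 ≤ m ∧ r' ≤ μ m := by
    intro r'
    induction r' with
    | zero => exact ⟨1, le_refl 1, Nat.zero_le _⟩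
    | succ r' ih =>
      obtain ⟨m, hm1, hm2⟩ := ih
      obtain ⟨m', hmm', hlt⟩ := key m
      exact ⟨m', by omega, by omega⟩
  obtain ⟨m, hm1, hm2⟩ := grow r
  exact ⟨m, by omega, fun x hx => le_trans hm2 (hmin m x hx)⟩
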